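/- On the type of pairs (n, G) with n : ℕ and G a 0-1 matrix over Fin n, let R_vertex be the relation 'H is, up to a relabeling bijection of its index type, a vertex explosion of G at some vertex v with respect to some partition (M₁, M₂)', and let R_edge be the subrelation where moreover M₁ is a singleton (edge explosion). Then the equivalence relation generated by R_edge equals the equivalence relation generated by R_vertex. -/

import Mathlib

/-- A 0-1 matrix on an index type `V`. -/
def IsZeroOne {V : Type*} (B : V → V → ℕ) : Prop := ∀ i j, B i j = 0 ∨ B i j = 1

/-- The conditions on the data `(v, M₁, M₂)` of a vertex explosion of the 0-1 matrix `B`: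
`M₁` and `M₂` are a partition of `supp(B v) = {w | B v w = 1}` into nonempty sets. -/
structure ExplosionData {V : Type*} (B : V → V → ℕ) (v : V) (M₁ M₂ : Set V) : Prop where
  zeroOne : IsZeroOne B
  nonempty₁ : M₁.Nonempty
  nonempty₂ : M₂.Nonempty
  disj : Disjoint M₁ M₂
  union : M₁ ∪ M₂ = {w | B v w = 1}

open Classical in
/-- The vertex explosion of `B` at `v` with respect to `(M₁, M₂)`; the vertex `v` is split
into `v′ = Sum.inr 0` and `v″ = Sum.inr 1`. -/
noncomputable def vertexExplosion {V : Type*} (B : V → V → ℕ) (v : V) (M₁ M₂ : Set V) :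
    ({u : V // u ≠ v} ⊕ Fin 2) → ({u : V // u ≠ v} ⊕ Fin 2) → ℕ
  | Sum.inl u, Sum.inl w => B u.1 w.1
  | Sum.inl u, Sum.inr _ => B u.1 v
  | Sum.inr a, Sum.inl w => if (a = 0 ∧ w.1 ∈ M₁) ∨ (a = 1 ∧ w.1 ∈ M₂) then 1 else 0
  | Sum.inr a, Sum.inr _ => if (a = 0 ∧ v ∈ M₁) ∨ (a = 1 ∧ v ∈ M₂) then 1 else 0

/-- `H` is, up to a relabeling bijection of its index type, a vertex explosion of `G`. -/
def RVertex (G H : Σ n : ℕ, Fin n → Fin n → ℕ) : Prop :=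
  ∃ (v : Fin G.1) (M₁ M₂ : Set (Fin G.1)),
    ExplosionData G.2 v M₁ M₂ ∧
    ∃ τ : Fin H.1 ≃ ({u : Fin G.1 // u ≠ v} ⊕ Fin 2),
      ∀ i j, H.2 i j = vertexExplosion G.2 v M₁ M₂ (τ i) (τ j)

/-- `H` is, up to a relabeling bijection of its index type, an edge explosion of `G`
(a vertex explosion in which `M₁` is a singleton). -/
def REdge (G H : Σ n : ℕ, Fin n → Fin n → ℕ) : Prop :=
  ∃ (v : Fin G.1) (M₁ M₂ : Set (Fin G.1)),
    ExplosionData G.2 v M₁ M₂ ∧ (∃ e, M₁ = {e}) ∧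
    ∃ τ : Fin H.1 ≃ ({u : Fin G.1 // u ≠ v} ⊕ Fin 2),
      ∀ i j, H.2 i j = vertexExplosion G.2 v M₁ M₂ (τ i) (τ j)

open Classical Set

/-- Relabeling lemma: vertex explosion commutes with relabeling. -/
theorem vertexExplosion_relabel {V V' : Type*} (σ : V ≃ V') (B : V → V → ℕ)
    (B' : V' → V' → ℕ) (hB : ∀ x y, B x y = B' (σ x) (σ y)) (v : V) (M₁ M₂ : Set V) :
    ∃ ψ : ({u : V // u ≠ v} ⊕ Fin 2) ≃ ({u : V' // u ≠ σ v} ⊕ Fin 2),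
      ∀ a b, vertexExplosion B v M₁ M₂ a b =
        vertexExplosion B' (σ v) (σ '' M₁) (σ '' M₂) (ψ a) (ψ b) := by
  refine ⟨Equiv.sumCongr (σ.subtypeEquiv (fun u => by simp)) (Equiv.refl _), ?_⟩
  rintro (a | a) (b | b) <;>
    simp [vertexExplosion, hB, Set.mem_image, σ.injective.eq_iff, σ.injective.mem_set_image, Equiv.subtypeEquiv]

theorem ExplosionData.relabel {V V' : Type*} (σ : V ≃ V') {B : V → V → ℕ}
    (B' : V' → V' → ℕ) (hB : ∀ x y, B x y = B' (σ x) (σ y)) {v : V} {M₁ M₂ : Set V}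
    (h : ExplosionData B v M₁ M₂) :
    ExplosionData B' (σ v) (σ '' M₁) (σ '' M₂) := by
  constructor
  · intro i j
    have := h.zeroOne (σ.symm i) (σ.symm j)
    rwa [hB, σ.apply_symm_apply, σ.apply_symm_apply] at this
  · exact h.nonempty₁.image σ
  · exact h.nonempty₂.image σ
  · exact (Set.disjoint_image_iff σ.injective).2 h.disj
  · rw [← Set.image_union, h.union]
    ext x
    simp only [Set.mem_image, Set.mem_setOf_eq]
    constructor
    · rintro ⟨w, hw, rfl⟩; rwa [← hB]
    · intro hx; exact ⟨σ.symm x, by rw [hB, σ.apply_symm_apply]; exact hx, σ.apply_symm_apply x⟩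

theorem isZeroOne_vertexExplosion {V : Type*} {B : V → V → ℕ} (hB : IsZeroOne B)
    (v : V) (M₁ M₂ : Set V) : IsZeroOne (vertexExplosion B v M₁ M₂) := by
  rintro (i | i) (j | j) <;> simp only [vertexExplosion]
  · exact hB _ _
  · exact hB _ _
  · split <;> simp
  · split <;> simp

/-- Generic edge-explosion data: split off a single out-neighbor `y` of `x`. -/
theorem edgeData {V : Type*} {C : V → V → ℕ} (hC : IsZeroOne C) (x y : V)
    (hy : C x y = 1) (hz : ∃ z, z ≠ y ∧ C x z = 1) :
    ExplosionData C x {y} ({w | C x w = 1} \ {y}) := by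
  obtain ⟨z, hzy, hz⟩ := hz
  refine ⟨hC, ⟨y, rfl⟩, ⟨z, hz, hzy⟩, ?_, ?_⟩
  · simp [Set.disjoint_left]
  · rw [Set.union_diff_cancel]
    simpa using hy

noncomputable def dEquiv {V : Type*} (v : V) :
    ({x : {u : V // u ≠ v} ⊕ Fin 2 // x ≠ Sum.inr 1} ⊕ Fin 2) ≃
    ({x : {u : V // u ≠ v} ⊕ Fin 2 // x ≠ Sum.inr 0} ⊕ Fin 2) where
  toFun z := match z with
    | .inl ⟨.inl u, _⟩ => .inl ⟨.inl u, by simp⟩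
    | .inl ⟨.inr _, _⟩ => .inr 1
    | .inr a => if a = 0 then .inr 0 else .inl ⟨.inr 1, by simp⟩
  invFun z := match z with
    | .inl ⟨.inl u, _⟩ => .inl ⟨.inl u, by simp⟩
    | .inl ⟨.inr _, _⟩ => .inr 1
    | .inr a => if a = 0 then .inr 0 else .inl ⟨.inr 0, by simp⟩
  left_inv := by
    rintro (⟨u | a, h⟩ | a)
    · simp
    · have ha' : a ≠ 1 := fun ha => h (by rw [ha])
      have ha : a = 0 := by omega
      subst ha
      simp
    · by_cases ha : a = 0 <;> simp [ha]
      omega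
  right_inv := by
    rintro (⟨u | a, h⟩ | a)
    · simp
    · have ha' : a ≠ 0 := fun ha => h (by rw [ha])
      have ha : a = 1 := by omega
      subst ha
      simp
    · by_cases ha : a = 0 <;> simp [ha]
      omega

theorem ind_eq_one_iff (P : Prop) [Decidable P] : (if P then (1:ℕ) else 0) = 1 ↔ P := by
  split <;> simp [*]

theorem if_eq_if {P Q : Prop} {dp : Decidable P} {dq : Decidable Q} (h : P ↔ Q) :
    (@ite ℕ P dp 1 0) = @ite ℕ Q dq 1 0 := by
  cases propext h; cases Subsingleton.elim dp dq; rfl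

theorem diamond_eq {V : Type*} {B : V → V → ℕ} {v : V} {M₁ M₂ : Set V}
    (hd : ExplosionData B v M₁ M₂) {e : V} (he : e ∈ M₁) (hev : e ≠ v) :
    ∀ a b,
      vertexExplosion (vertexExplosion B v (M₁ \ {e}) (M₂ ∪ {e})) (Sum.inr 1)
        {Sum.inl ⟨e, hev⟩}
        ({x | vertexExplosion B v (M₁ \ {e}) (M₂ ∪ {e}) (Sum.inr 1) x = 1} \ {Sum.inl ⟨e, hev⟩})
        a b
      = vertexExplosion (vertexExplosion B v M₁ M₂) (Sum.inr 0) {Sum.inl ⟨e, hev⟩}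
        ({x | vertexExplosion B v M₁ M₂ (Sum.inr 0) x = 1} \ {Sum.inl ⟨e, hev⟩})
        (dEquiv v a) (dEquiv v b) := by
  have heM₂ : e ∉ M₂ := fun h' => (Set.disjoint_left.1 hd.disj he) h'
  have hve : v ≠ e := Ne.symm hev
  have hkey : ∀ x : V, x ∈ M₂ → ¬x = e := fun x hx hh => heM₂ (hh ▸ hx)
  rintro (⟨u | a, h⟩ | a) (⟨w | b, hb⟩ | b) <;>
    (try fin_cases a) <;> (try fin_cases b) <;>
    first
    | exact absurd rfl h
    | exact absurd rfl hb
    | rfl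
    | (simp (config := { decide := true }) only [dEquiv, Equiv.coe_fn_mk, vertexExplosion, if_true, if_false]
       apply if_eq_if
       simp only [vertexExplosion, Set.mem_diff, Set.mem_setOf_eq, Set.mem_singleton_iff,
         Set.mem_union, ind_eq_one_iff, Sum.inl.injEq, Sum.inr.injEq, Subtype.mk.injEq,
         Subtype.ext_iff, (by decide : ¬(1:Fin 2) = 0), (by decide : ¬(0:Fin 2) = 1),
         true_and, and_true, false_and, and_false, false_or, or_false]
       try (first
       | tauto
       | (constructor <;> intro hx <;> tauto)
       | aesop))

theorem redge_of_relabel (G H : Σ n : ℕ, Fin n → Fin n → ℕ) {V : Type*} (σ : V ≃ Fin G.1)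
    (B : V → V → ℕ) (hB : ∀ x y, B x y = G.2 (σ x) (σ y)) (v : V) (M₁ M₂ : Set V)
    (hd : ExplosionData B v M₁ M₂) (hsing : ∃ e : V, M₁ = {e})
    (ρ : Fin H.1 ≃ ({u : V // u ≠ v} ⊕ Fin 2))
    (hρ : ∀ i j, H.2 i j = vertexExplosion B v M₁ M₂ (ρ i) (ρ j)) : REdge G H := by
  obtain ⟨ψ, hψ⟩ := vertexExplosion_relabel σ B G.2 hB v M₁ M₂
  obtain ⟨e0, he0⟩ := hsing
  refine ⟨σ v, σ '' M₁, σ '' M₂, hd.relabel σ G.2 hB,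
    ⟨σ e0, by rw [he0, Set.image_singleton]⟩, ρ.trans ψ, fun i j => ?_⟩
  rw [hρ, hψ]
  rfl

theorem rvertex_to_eqvgen : ∀ (k : ℕ) (G H : Σ n : ℕ, Fin n → Fin n → ℕ)
    (v : Fin G.1) (M₁ M₂ : Set (Fin G.1)), ExplosionData G.2 v M₁ M₂ → M₁.ncard ≤ k →
    (∃ τ : Fin H.1 ≃ ({u : Fin G.1 // u ≠ v} ⊕ Fin 2),
      ∀ i j, H.2 i j = vertexExplosion G.2 v M₁ M₂ (τ i) (τ j)) →
    Relation.EqvGen REdge G H := by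
  intro k
  induction k with
  | zero =>
    intro G H v M₁ M₂ hd hk _
    have h1 : 0 < M₁.ncard := (Set.ncard_pos M₁.toFinite).2 hd.nonempty₁
    omega
  | succ k ih =>
    rintro G H v M₁ M₂ hd hk ⟨τ, hτ⟩
    by_cases hs : ∃ e, M₁ = {e}
    · exact Relation.EqvGen.rel _ _ ⟨v, M₁, M₂, hd, hs, τ, hτ⟩
    -- pick e ∈ M₁ with e ≠ v, and f ∈ M₁ \ {e}
    obtain ⟨a, ha⟩ := hd.nonempty₁
    obtain ⟨b, hb, hab⟩ : ∃ b ∈ M₁, b ≠ a := by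
      by_contra hc
      push_neg at hc
      exact hs ⟨a, Set.eq_singleton_iff_unique_mem.2 ⟨ha, hc⟩⟩
    obtain ⟨e, he, hev, f, hf⟩ : ∃ e ∈ M₁, e ≠ v ∧ ∃ f, f ∈ M₁ \ {e} := by
      by_cases hav : a = v
      · exact ⟨b, hb, fun h => hab (h.trans hav.symm), a, ha,
          by simp only [Set.mem_singleton_iff]; exact fun h => hab h.symm⟩
      · exact ⟨a, ha, hav, b, hb, by simp only [Set.mem_singleton_iff]; exact hab⟩
    have heM₂ : e ∉ M₂ := fun h' => (Set.disjoint_left.1 hd.disj he) h'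
    -- data for the intermediate explosion
    have hd' : ExplosionData G.2 v (M₁ \ {e}) (M₂ ∪ {e}) := by
      refine ⟨hd.zeroOne, ⟨f, hf⟩, hd.nonempty₂.mono Set.subset_union_left, ?_, ?_⟩
      · refine Set.disjoint_union_right.2 ⟨hd.disj.mono_left Set.diff_subset, ?_⟩
        simp [Set.disjoint_left]
      · rw [← hd.union]
        ext x
        by_cases hx : x = e <;> simp [hx, he] <;> tauto
    have hcard : (M₁ \ {e}).ncard ≤ k := by
      have := Set.ncard_diff_singleton_lt_of_mem he M₁.toFinite
      have h2 : (M₁ \ {e}).ncard < M₁.ncard := this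
      omega
    -- the intermediate graph K
    let V1 := ({u : Fin G.1 // u ≠ v} ⊕ Fin 2)
    let C := vertexExplosion G.2 v (M₁ \ {e}) (M₂ ∪ {e})
    let eσ := (Fintype.equivFin V1).symm
    let K : Σ n : ℕ, Fin n → Fin n → ℕ := ⟨Fintype.card V1, fun i j => C (eσ i) (eσ j)⟩
    have step1 : Relation.EqvGen REdge G K :=
      ih G K v (M₁ \ {e}) (M₂ ∪ {e}) hd' hcard ⟨eσ, fun i j => rfl⟩
    -- the common edge-explosion LS of K and H
    let N₁ : Set V1 := {Sum.inl ⟨e, hev⟩}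
    let N₂ : Set V1 := {x | C (Sum.inr 1) x = 1} \ N₁
    let LL := vertexExplosion C (Sum.inr 1) N₁ N₂
    let W := ({x : V1 // x ≠ Sum.inr 1} ⊕ Fin 2)
    let eρ := (Fintype.equivFin W).symm
    let LS : Σ n : ℕ, Fin n → Fin n → ℕ := ⟨Fintype.card W, fun i j => LL (eρ i) (eρ j)⟩
    have EDC : ExplosionData C (Sum.inr 1) N₁ N₂ := by
      refine edgeData (isZeroOne_vertexExplosion hd.zeroOne _ _ _) _ _ ?_ ?_
      · show (vertexExplosion G.2 v (M₁ \ {e}) (M₂ ∪ {e})) (Sum.inr 1) (Sum.inl ⟨e, hev⟩) = 1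
        simp [vertexExplosion]
      · obtain ⟨w₂, hw₂⟩ := hd.nonempty₂
        by_cases hwv : w₂ = v
        · refine ⟨Sum.inr 0, by simp, ?_⟩
          show (vertexExplosion G.2 v (M₁ \ {e}) (M₂ ∪ {e})) (Sum.inr 1) (Sum.inr 0) = 1
          have : v ∈ M₂ := hwv ▸ hw₂
          simp [vertexExplosion, this]
        · refine ⟨Sum.inl ⟨w₂, hwv⟩, ?_, ?_⟩
          · simp only [ne_eq, Sum.inl.injEq, Subtype.mk.injEq]
            exact fun h => heM₂ (h ▸ hw₂)
          · show (vertexExplosion G.2 v (M₁ \ {e}) (M₂ ∪ {e})) (Sum.inr 1) (Sum.inl ⟨w₂, hwv⟩) = 1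
            simp [vertexExplosion, hw₂]
    have step2 : REdge K LS := by
      refine redge_of_relabel K LS eσ.symm C (fun x y => by simp [K]) (Sum.inr 1) N₁ N₂
        EDC ⟨Sum.inl ⟨e, hev⟩, rfl⟩ eρ (fun i j => rfl)
    -- the edge explosion of H
    let D := vertexExplosion G.2 v M₁ M₂
    let P₁ : Set V1 := {Sum.inl ⟨e, hev⟩}
    let P₂ : Set V1 := {x | D (Sum.inr 0) x = 1} \ P₁
    have EDD : ExplosionData D (Sum.inr 0) P₁ P₂ := by
      refine edgeData (isZeroOne_vertexExplosion hd.zeroOne _ _ _) _ _ ?_ ?_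
      · show (vertexExplosion G.2 v M₁ M₂) (Sum.inr 0) (Sum.inl ⟨e, hev⟩) = 1
        simp [vertexExplosion, he]
      · by_cases hfv : f = v
        · refine ⟨Sum.inr 0, by simp, ?_⟩
          show (vertexExplosion G.2 v M₁ M₂) (Sum.inr 0) (Sum.inr 0) = 1
          have : v ∈ M₁ := hfv ▸ hf.1
          simp [vertexExplosion, this]
        · refine ⟨Sum.inl ⟨f, hfv⟩, ?_, ?_⟩
          · simp only [ne_eq, Sum.inl.injEq, Subtype.mk.injEq]
            exact hf.2
          · show (vertexExplosion G.2 v M₁ M₂) (Sum.inr 0) (Sum.inl ⟨f, hfv⟩) = 1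
            simp [vertexExplosion, hf.1]
    have step3 : REdge H LS := by
      refine redge_of_relabel H LS τ.symm D
        (fun x y => by
          show vertexExplosion G.2 v M₁ M₂ x y = H.2 (τ.symm x) (τ.symm y)
          rw [hτ]
          simp) (Sum.inr 0) P₁ P₂
        EDD ⟨Sum.inl ⟨e, hev⟩, rfl⟩ (eρ.trans (dEquiv v)) (fun i j => ?_)
      exact diamond_eq hd he hev (eρ i) (eρ j)
    exact Relation.EqvGen.trans _ _ _ step1
      (Relation.EqvGen.trans _ _ _ (Relation.EqvGen.rel _ _ step2)
        (Relation.EqvGen.symm _ _ (Relation.EqvGen.rel _ _ step3)))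

/-- Edge explosion and vertex explosion generate the same equivalence relation. -/
theorem stmt_11 (G H : Σ n : ℕ, Fin n → Fin n → ℕ) :
    Relation.EqvGen REdge G H ↔ Relation.EqvGen RVertex G H := by
  constructor
  · exact Relation.EqvGen.mono (r := REdge) (p := RVertex) (fun G H ⟨v, M₁, M₂, hd, _, τ, hτ⟩ => ⟨v, M₁, M₂, hd, τ, hτ⟩) G H
  · intro h
    induction h with
    | rel G H hGH =>
      obtain ⟨v, M₁, M₂, hd, τ, hτ⟩ := hGH
      exact rvertex_to_eqvgen M₁.ncard G H v M₁ M₂ hd le_rfl ⟨τ, hτ⟩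
    | refl G => exact Relation.EqvGen.refl G
    | symm a b _ ih => exact Relation.EqvGen.symm a b ih
    | trans a b c _ _ ih1 ih2 => exact Relation.EqvGen.trans a b c ih1 ih2
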